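/- Let Ω ⊆ ℝ² be open and connected, let q : Ω → ℝ be smooth, and suppose (Sˣ, Sʸ) and (S̃ˣ, S̃ʸ) are two pairs of smooth functions on Ω, each satisfying the equations (E1) ∂_y Sˣ + ∂_x Sʸ = 4 q_x q_y, (E2) ∂_x Sˣ = 2 q_x², (E3) ∂_y Sʸ = 2 q_y² (with the same q). Then there exist constants C₀, C₁, C₂ ∈ ℝ such that S̃ˣ(x,y) = Sˣ(x,y) + C₀ y + C₁ and S̃ʸ(x,y) = Sʸ(x,y) − C₀ x + C₂ for all (x,y) ∈ Ω. -/

import Mathlib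

open Real Set

/-- Partial derivative in the first variable. -/
noncomputable def px (f : ℝ × ℝ → ℝ) : ℝ × ℝ → ℝ :=
  fun p => deriv (fun t => f (t, p.2)) p.1

/-- Partial derivative in the second variable. -/
noncomputable def py (f : ℝ × ℝ → ℝ) : ℝ × ℝ → ℝ :=
  fun p => deriv (fun t => f (p.1, t)) p.2

/- ====================  Auxiliary lemmas  ==================== -/

lemma slice_x_diff {f : ℝ × ℝ → ℝ} {x y : ℝ} (hf : DifferentiableAt ℝ f (x, y)) :
    DifferentiableAt ℝ (fun t => f (t, y)) x :=
  hf.comp x (differentiableAt_id.prodMk (differentiableAt_const _))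

lemma slice_y_diff {f : ℝ × ℝ → ℝ} {x y : ℝ} (hf : DifferentiableAt ℝ f (x, y)) :
    DifferentiableAt ℝ (fun t => f (x, t)) y :=
  hf.comp y ((differentiableAt_const _).prodMk differentiableAt_id)

lemma px_sub {f g : ℝ × ℝ → ℝ} {p : ℝ × ℝ} (hf : DifferentiableAt ℝ f p)
    (hg : DifferentiableAt ℝ g p) :
    px (fun q => f q - g q) p = px f p - px g p := by
  have hf' : DifferentiableAt ℝ f (p.1, p.2) := hf
  have hg' : DifferentiableAt ℝ g (p.1, p.2) := hg
  exact deriv_sub (slice_x_diff hf') (slice_x_diff hg')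

lemma py_sub {f g : ℝ × ℝ → ℝ} {p : ℝ × ℝ} (hf : DifferentiableAt ℝ f p)
    (hg : DifferentiableAt ℝ g p) :
    py (fun q => f q - g q) p = py f p - py g p := by
  have hf' : DifferentiableAt ℝ f (p.1, p.2) := hf
  have hg' : DifferentiableAt ℝ g (p.1, p.2) := hg
  exact deriv_sub (slice_y_diff hf') (slice_y_diff hg')

/-- If `px f = 0` on a convex open set, `f` is constant on horizontal segments. -/
lemma const_horiz {s : Set (ℝ × ℝ)} (hs : Convex ℝ s) (hso : IsOpen s)
    {f : ℝ × ℝ → ℝ} (hf : ∀ p ∈ s, DifferentiableAt ℝ f p)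
    (h0 : ∀ p ∈ s, px f p = 0) {a b : ℝ × ℝ} (ha : a ∈ s) (hb : b ∈ s)
    (h2 : a.2 = b.2) : f a = f b := by
  set I : Set ℝ := (fun t => (t, a.2)) ⁻¹' s with hI
  have hIopen : IsOpen I := hso.preimage (continuous_id.prodMk continuous_const)
  have hIconv : Convex ℝ I := by
    intro x hx y hy α β hα hβ hαβ
    have hmem := hs hx hy hα hβ hαβ
    have h2' : α * a.2 + β * a.2 = a.2 := by rw [← add_mul, hαβ, one_mul]
    simpa [hI, Prod.smul_mk, Prod.mk_add_mk, h2', smul_eq_mul] using hmem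
  have gdiff : DifferentiableOn ℝ (fun t => f (t, a.2)) I := by
    intro t ht
    exact (slice_x_diff (hf _ ht)).differentiableWithinAt
  have gzero : ∀ t ∈ I, fderivWithin ℝ (fun u => f (u, a.2)) I t = 0 := by
    intro t ht
    rw [fderivWithin_of_isOpen hIopen ht]
    have hd : DifferentiableAt ℝ (fun u => f (u, a.2)) t := slice_x_diff (hf _ ht)
    have hz : deriv (fun u => f (u, a.2)) t = 0 := h0 _ ht
    have := hd.hasDerivAt
    rw [hz] at this
    have := this.hasFDerivAt.fderiv
    rw [this]
    ext v; simp
  have ha' : a.1 ∈ I := by simp [hI]; exact ha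
  have hb' : b.1 ∈ I := by
    simp only [hI, mem_preimage]
    rw [h2]
    exact hb
  have := hIconv.is_const_of_fderivWithin_eq_zero gdiff gzero ha' hb'
  calc f a = f (b.1, a.2) := this
    _ = f b := by rw [h2]

/-- If `py f = 0` on a convex open set, `f` is constant on vertical segments. -/
lemma const_vert {s : Set (ℝ × ℝ)} (hs : Convex ℝ s) (hso : IsOpen s)
    {f : ℝ × ℝ → ℝ} (hf : ∀ p ∈ s, DifferentiableAt ℝ f p)
    (h0 : ∀ p ∈ s, py f p = 0) {a b : ℝ × ℝ} (ha : a ∈ s) (hb : b ∈ s)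
    (h1 : a.1 = b.1) : f a = f b := by
  set I : Set ℝ := (fun t => (a.1, t)) ⁻¹' s with hI
  have hIopen : IsOpen I := hso.preimage (continuous_const.prodMk continuous_id)
  have hIconv : Convex ℝ I := by
    intro x hx y hy α β hα hβ hαβ
    have hmem := hs hx hy hα hβ hαβ
    have h1' : α * a.1 + β * a.1 = a.1 := by rw [← add_mul, hαβ, one_mul]
    simpa [hI, Prod.smul_mk, Prod.mk_add_mk, h1', smul_eq_mul] using hmem
  have gdiff : DifferentiableOn ℝ (fun t => f (a.1, t)) I := by
    intro t ht
    exact (slice_y_diff (hf _ ht)).differentiableWithinAt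
  have gzero : ∀ t ∈ I, fderivWithin ℝ (fun u => f (a.1, u)) I t = 0 := by
    intro t ht
    rw [fderivWithin_of_isOpen hIopen ht]
    have hd : DifferentiableAt ℝ (fun u => f (a.1, u)) t := slice_y_diff (hf _ ht)
    have hz : deriv (fun u => f (a.1, u)) t = 0 := h0 _ ht
    have := hd.hasDerivAt
    rw [hz] at this
    have := this.hasFDerivAt.fderiv
    rw [this]
    ext v; simp
  have ha' : a.2 ∈ I := by simp [hI]; exact ha
  have hb' : b.2 ∈ I := by
    simp only [hI, mem_preimage]
    rw [h1]
    exact hb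
  have := hIconv.is_const_of_fderivWithin_eq_zero gdiff gzero ha' hb'
  calc f a = f (a.1, b.2) := this
    _ = f b := by rw [h1]

/-- A function that is locally constant on an open preconnected set is constant there. -/
lemma const_of_locally_const {Ω : Set (ℝ × ℝ)} (hΩ : IsOpen Ω) (hconn : IsPreconnected Ω)
    {f : ℝ × ℝ → ℝ}
    (loc : ∀ p ∈ Ω, ∃ ε > 0, ∀ q ∈ Metric.ball p ε, f q = f p)
    {a b : ℝ × ℝ} (ha : a ∈ Ω) (hb : b ∈ Ω) : f a = f b := by
  haveI : PreconnectedSpace Ω := isPreconnected_iff_preconnectedSpace.1 hconn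
  have hlc : IsLocallyConstant (fun x : Ω => f x) := by
    rw [IsLocallyConstant.iff_exists_open]
    intro x
    obtain ⟨ε, hε, hconst⟩ := loc x x.2
    exact ⟨Subtype.val ⁻¹' Metric.ball (x : ℝ × ℝ) ε,
      Metric.isOpen_ball.preimage continuous_subtype_val,
      Metric.mem_ball_self hε, fun y hy => hconst y hy⟩
  exact hlc.apply_eq_of_preconnectedSpace ⟨a, ha⟩ ⟨b, hb⟩

/-- If both partial derivatives vanish on an open preconnected set, the function is constant. -/
lemma const_of_partials_zero {Ω : Set (ℝ × ℝ)} (hΩ : IsOpen Ω) (hconn : IsPreconnected Ω)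
    {f : ℝ × ℝ → ℝ} (hf : ∀ p ∈ Ω, DifferentiableAt ℝ f p)
    (hx : ∀ p ∈ Ω, px f p = 0) (hy : ∀ p ∈ Ω, py f p = 0)
    {a b : ℝ × ℝ} (ha : a ∈ Ω) (hb : b ∈ Ω) : f a = f b := by
  refine const_of_locally_const hΩ hconn ?_ ha hb
  intro p hp
  obtain ⟨ε, hε, hball⟩ := Metric.isOpen_iff.1 hΩ p hp
  refine ⟨ε, hε, fun q hq => ?_⟩
  have hmid : ((q.1, p.2) : ℝ × ℝ) ∈ Metric.ball p ε := by
    rw [Metric.mem_ball] at hq ⊢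
    have h1 : dist q.1 p.1 ≤ dist q p := by rw [Prod.dist_eq]; exact le_max_left _ _
    calc dist ((q.1, p.2) : ℝ × ℝ) p = max (dist q.1 p.1) (dist p.2 p.2) := Prod.dist_eq
      _ = dist q.1 p.1 := by simp [dist_nonneg]
      _ ≤ dist q p := h1
      _ < ε := hq
  have hvert : f q = f (q.1, p.2) :=
    const_vert (convex_ball p ε) Metric.isOpen_ball
      (fun r hr => hf r (hball hr)) (fun r hr => hy r (hball hr)) hq hmid rfl
  have hhor : f (q.1, p.2) = f p :=
    const_horiz (convex_ball p ε) Metric.isOpen_ball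
      (fun r hr => hf r (hball hr)) (fun r hr => hx r (hball hr)) hmid
      (Metric.mem_ball_self hε) rfl
  rw [hvert, hhor]

/-- If `px f = 0` on a convex open set then `py f` only depends on the second coordinate. -/
lemma py_congr_of_px_zero {s : Set (ℝ × ℝ)} (hs : Convex ℝ s) (hso : IsOpen s)
    {f : ℝ × ℝ → ℝ} (hf : ∀ p ∈ s, DifferentiableAt ℝ f p)
    (h0 : ∀ p ∈ s, px f p = 0) {a b : ℝ × ℝ} (ha : a ∈ s) (hb : b ∈ s)
    (h2 : a.2 = b.2) : py f a = py f b := by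
  show deriv (fun t => f (a.1, t)) a.2 = deriv (fun t => f (b.1, t)) b.2
  rw [h2]
  apply Filter.EventuallyEq.deriv_eq
  have hev : ∀ᶠ t in nhds b.2, (a.1, t) ∈ s ∧ (b.1, t) ∈ s := by
    have hao : IsOpen ((fun t => ((a.1, t) : ℝ × ℝ)) ⁻¹' s) :=
      hso.preimage (continuous_const.prodMk continuous_id)
    have hbo : IsOpen ((fun t => ((b.1, t) : ℝ × ℝ)) ⁻¹' s) :=
      hso.preimage (continuous_const.prodMk continuous_id)
    have ha' : ((a.1, b.2) : ℝ × ℝ) ∈ s := by rw [← h2]; exact ha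
    have hb' : ((b.1, b.2) : ℝ × ℝ) ∈ s := hb
    filter_upwards [hao.eventually_mem ha', hbo.eventually_mem hb'] with t h₁ h₂
    exact ⟨h₁, h₂⟩
  filter_upwards [hev] with t ht
  exact const_horiz hs hso hf h0 ht.1 ht.2 rfl

/-- If `py f = 0` on a convex open set then `px f` only depends on the first coordinate. -/
lemma px_congr_of_py_zero {s : Set (ℝ × ℝ)} (hs : Convex ℝ s) (hso : IsOpen s)
    {f : ℝ × ℝ → ℝ} (hf : ∀ p ∈ s, DifferentiableAt ℝ f p)
    (h0 : ∀ p ∈ s, py f p = 0) {a b : ℝ × ℝ} (ha : a ∈ s) (hb : b ∈ s)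
    (h1 : a.1 = b.1) : px f a = px f b := by
  show deriv (fun t => f (t, a.2)) a.1 = deriv (fun t => f (t, b.2)) b.1
  rw [h1]
  apply Filter.EventuallyEq.deriv_eq
  have hev : ∀ᶠ t in nhds b.1, (t, a.2) ∈ s ∧ (t, b.2) ∈ s := by
    have hao : IsOpen ((fun t => ((t, a.2) : ℝ × ℝ)) ⁻¹' s) :=
      hso.preimage (continuous_id.prodMk continuous_const)
    have hbo : IsOpen ((fun t => ((t, b.2) : ℝ × ℝ)) ⁻¹' s) :=
      hso.preimage (continuous_id.prodMk continuous_const)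
    have ha' : ((b.1, a.2) : ℝ × ℝ) ∈ s := by rw [← h1]; exact ha
    have hb' : ((b.1, b.2) : ℝ × ℝ) ∈ s := hb
    filter_upwards [hao.eventually_mem ha', hbo.eventually_mem hb'] with t h₁ h₂
    exact ⟨h₁, h₂⟩
  filter_upwards [hev] with t ht
  exact const_vert hs hso hf h0 ht.1 ht.2 rfl

/-- any two pairs of smooth resolvents for the same `q` on an open connected `Ω`
differ by `(C₀ y + C₁, −C₀ x + C₂)`. -/
theorem resolvents_unique_up_to_linear
    (Ω : Set (ℝ × ℝ)) (hΩ : IsOpen Ω) (hconn : IsConnected Ω)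
    (q Sx Sy Sx' Sy' : ℝ × ℝ → ℝ)
    (hq : ContDiffOn ℝ (⊤ : ℕ∞) q Ω)
    (hSx : ContDiffOn ℝ (⊤ : ℕ∞) Sx Ω)
    (hSy : ContDiffOn ℝ (⊤ : ℕ∞) Sy Ω)
    (hSx' : ContDiffOn ℝ (⊤ : ℕ∞) Sx' Ω)
    (hSy' : ContDiffOn ℝ (⊤ : ℕ∞) Sy' Ω)
    (hE1 : ∀ p ∈ Ω, py Sx p + px Sy p = 4 * px q p * py q p)
    (hE2 : ∀ p ∈ Ω, px Sx p = 2 * (px q p) ^ 2)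
    (hE3 : ∀ p ∈ Ω, py Sy p = 2 * (py q p) ^ 2)
    (hE1' : ∀ p ∈ Ω, py Sx' p + px Sy' p = 4 * px q p * py q p)
    (hE2' : ∀ p ∈ Ω, px Sx' p = 2 * (px q p) ^ 2)
    (hE3' : ∀ p ∈ Ω, py Sy' p = 2 * (py q p) ^ 2) :
    ∃ C₀ C₁ C₂ : ℝ, ∀ p ∈ Ω,
      Sx' p = Sx p + C₀ * p.2 + C₁ ∧ Sy' p = Sy p - C₀ * p.1 + C₂ := by
  have hdiff : ∀ (f : ℝ × ℝ → ℝ), ContDiffOn ℝ (⊤ : ℕ∞) f Ω →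
      ∀ p ∈ Ω, DifferentiableAt ℝ f p := fun f hf p hp =>
    (hf.contDiffAt (hΩ.mem_nhds hp)).differentiableAt (by simp)
  set u : ℝ × ℝ → ℝ := fun p => Sx' p - Sx p with hu
  set w : ℝ × ℝ → ℝ := fun p => Sy' p - Sy p with hw
  have hud : ∀ p ∈ Ω, DifferentiableAt ℝ u p := fun p hp =>
    (hdiff Sx' hSx' p hp).sub (hdiff Sx hSx p hp)
  have hwd : ∀ p ∈ Ω, DifferentiableAt ℝ w p := fun p hp =>
    (hdiff Sy' hSy' p hp).sub (hdiff Sy hSy p hp)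
  have hupx : ∀ p ∈ Ω, px u p = 0 := by
    intro p hp
    rw [hu, px_sub (hdiff Sx' hSx' p hp) (hdiff Sx hSx p hp), hE2' p hp, hE2 p hp, sub_self]
  have hwpy : ∀ p ∈ Ω, py w p = 0 := by
    intro p hp
    rw [hw, py_sub (hdiff Sy' hSy' p hp) (hdiff Sy hSy p hp), hE3' p hp, hE3 p hp, sub_self]
  have hsum : ∀ p ∈ Ω, py u p + px w p = 0 := by
    intro p hp
    rw [hu, hw, py_sub (hdiff Sx' hSx' p hp) (hdiff Sx hSx p hp),
      px_sub (hdiff Sy' hSy' p hp) (hdiff Sy hSy p hp)]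
    have h1 := hE1 p hp
    have h1' := hE1' p hp
    linarith
  -- the function h := py u is locally constant on Ω
  obtain ⟨p₀, hp₀⟩ := hconn.nonempty
  set C₀ : ℝ := py u p₀ with hC₀
  have hconst : ∀ p ∈ Ω, py u p = C₀ := by
    have hloc : ∀ p ∈ Ω, ∃ ε > 0, ∀ r ∈ Metric.ball p ε, py u r = py u p := by
      intro p hp
      obtain ⟨ε, hε, hball⟩ := Metric.isOpen_iff.1 hΩ p hp
      refine ⟨ε, hε, fun r hr => ?_⟩
      have hballd : ∀ z ∈ Metric.ball p ε, DifferentiableAt ℝ u z := fun z hz => hud z (hball hz)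
      have hballwd : ∀ z ∈ Metric.ball p ε, DifferentiableAt ℝ w z := fun z hz => hwd z (hball hz)
      have hballpx : ∀ z ∈ Metric.ball p ε, px u z = 0 := fun z hz => hupx z (hball hz)
      have hballpy : ∀ z ∈ Metric.ball p ε, py w z = 0 := fun z hz => hwpy z (hball hz)
      have hmid : ((p.1, r.2) : ℝ × ℝ) ∈ Metric.ball p ε := by
        rw [Metric.mem_ball] at hr ⊢
        have h2 : dist r.2 p.2 ≤ dist r p := by rw [Prod.dist_eq]; exact le_max_right _ _
        calc dist ((p.1, r.2) : ℝ × ℝ) p = max (dist p.1 p.1) (dist r.2 p.2) := Prod.dist_eq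
          _ ≤ dist r p := by simp [dist_nonneg]; exact h2
          _ < ε := hr
      -- step 1 : py u r = py u (p.1, r.2)
      have step1 : py u r = py u (p.1, r.2) :=
        py_congr_of_px_zero (convex_ball p ε) Metric.isOpen_ball hballd hballpx hr hmid rfl
      -- step 2 : px w (p.1, r.2) = px w p
      have step2 : px w ((p.1, r.2) : ℝ × ℝ) = px w p := by
        have := px_congr_of_py_zero (convex_ball p ε) Metric.isOpen_ball hballwd hballpy
          hmid (Metric.mem_ball_self hε) rfl
        exact this
      -- combine via py u = - px w on Ω
      have e1 : py u ((p.1, r.2) : ℝ × ℝ) = -px w ((p.1, r.2) : ℝ × ℝ) := by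
        have := hsum _ (hball hmid); linarith
      have e2 : py u p = -px w p := by
        have := hsum p hp; linarith
      rw [step1, e1, step2, ← e2]
    intro p hp
    exact const_of_locally_const hΩ hconn.isPreconnected
      (f := py u) hloc hp hp₀
  -- u(p) - C₀ p.2 is constant
  set u₂ : ℝ × ℝ → ℝ := fun p => u p - C₀ * p.2 with hu₂
  have hu₂d : ∀ p ∈ Ω, DifferentiableAt ℝ u₂ p := fun p hp =>
    (hud p hp).sub ((differentiableAt_const C₀).mul differentiableAt_snd)
  have hu₂px : ∀ p ∈ Ω, px u₂ p = 0 := by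
    intro p hp
    have : px u₂ p = px u p := by
      show deriv (fun t => u (t, p.2) - C₀ * p.2) p.1 = deriv (fun t => u (t, p.2)) p.1
      rw [deriv_sub_const]
    rw [this, hupx p hp]
  have hu₂py : ∀ p ∈ Ω, py u₂ p = 0 := by
    intro p hp
    have hsl : DifferentiableAt ℝ (fun t => u (p.1, t)) p.2 := slice_y_diff (hud p hp)
    have : py u₂ p = py u p - C₀ := by
      show deriv (fun t => u (p.1, t) - C₀ * t) p.2 = py u p - C₀
      rw [deriv_fun_sub hsl (by fun_prop)]
      have hc : deriv (fun t : ℝ => C₀ * t) p.2 = C₀ := by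
        simpa using ((hasDerivAt_id p.2).const_mul C₀).deriv
      rw [hc]
      rfl
    rw [this, hconst p hp, sub_self]
  -- w(p) + C₀ p.1 is constant
  set w₂ : ℝ × ℝ → ℝ := fun p => w p + C₀ * p.1 with hw₂
  have hw₂d : ∀ p ∈ Ω, DifferentiableAt ℝ w₂ p := fun p hp =>
    (hwd p hp).add ((differentiableAt_const C₀).mul differentiableAt_fst)
  have hw₂px : ∀ p ∈ Ω, px w₂ p = 0 := by
    intro p hp
    have hsl : DifferentiableAt ℝ (fun t => w (t, p.2)) p.1 := slice_x_diff (hwd p hp)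
    have : px w₂ p = px w p + C₀ := by
      show deriv (fun t => w (t, p.2) + C₀ * t) p.1 = px w p + C₀
      rw [deriv_fun_add hsl (by fun_prop)]
      have hc : deriv (fun t : ℝ => C₀ * t) p.1 = C₀ := by
        simpa using ((hasDerivAt_id p.1).const_mul C₀).deriv
      rw [hc]
      rfl
    rw [this]
    have e2 : px w p = -py u p := by have := hsum p hp; linarith
    rw [e2, hconst p hp]
    ring
  have hw₂py : ∀ p ∈ Ω, py w₂ p = 0 := by
    intro p hp
    have : py w₂ p = py w p := by
      show deriv (fun t => w (p.1, t) + C₀ * p.1) p.2 = deriv (fun t => w (p.1, t)) p.2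
      rw [deriv_add_const]
    rw [this, hwpy p hp]
  refine ⟨C₀, u₂ p₀, w₂ p₀, fun p hp => ?_⟩
  have h1 : u₂ p = u₂ p₀ :=
    const_of_partials_zero hΩ hconn.isPreconnected hu₂d hu₂px hu₂py hp hp₀
  have h2 : w₂ p = w₂ p₀ :=
    const_of_partials_zero hΩ hconn.isPreconnected hw₂d hw₂px hw₂py hp hp₀
  constructor
  · have : Sx' p - Sx p - C₀ * p.2 = u₂ p₀ := h1
    linarith
  · have : Sy' p - Sy p + C₀ * p.1 = w₂ p₀ := h2
    linarith
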